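/- Let X be a real Banach space, Φ, Ψ ∈ C¹(X), λ > 0, J_λ = Φ − λΨ, r ∈ ℝ and ū ∈ X satisfy: (A1) inf_{u∈X} Φ(u) = Φ(0) = Ψ(0) = 0; (A2) 0 < Φ(ū) < r; (A3) sup_{Φ(u)≤r} Ψ(u)/r < Ψ(ū)/Φ(ū); (A4) inf_{u∈X} J_λ(u) = −∞ for all λ ∈ I_r := ( Φ(ū)/Ψ(ū) , [sup_{Φ(u)≤r} Ψ(u)/r]^{−1} ). Then for every λ ∈ I_r for which J_λ satisfies the Palais–Smale condition, there exist u_λ, v_λ ∈ X with J_λ'(u_λ) = J_λ'(v_λ) = 0 and J_λ(u_λ) < 0 < J_λ(v_λ). -/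

import Mathlib

open Filter Topology

noncomputable section

/-- The Palais–Smale condition for a `C¹` functional `J` on a Banach space:
every sequence along which `J` converges and `J'` tends to `0` in the dual
has a convergent subsequence. -/
def PalaisSmale {X : Type*} [NormedAddCommGroup X] [NormedSpace ℝ X] (J : X → ℝ) : Prop :=
  ∀ (u : ℕ → X) (c : ℝ),
    Tendsto (fun n => J (u n)) atTop (𝓝 c) →
    Tendsto (fun n => fderiv ℝ J (u n)) atTop (𝓝 (0 : X →L[ℝ] ℝ)) →
    ∃ (v : X) (φ : ℕ → ℕ), StrictMono φ ∧ Tendsto (fun k => u (φ k)) atTop (𝓝 v)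


theorem ekeland_weak {α : Type*} [MetricSpace α] [CompleteSpace α]
    (J : α → ℝ) (hJ : LowerSemicontinuous J) (B : ℝ) (hB : ∀ x, B ≤ J x)
    (ε : ℝ) (hε : 0 < ε) (x₀ : α) :
    ∃ v : α, J v ≤ J x₀ ∧ ∀ w : α, J v ≤ J w + ε * dist v w := by
  set R : α → α → Prop := fun y x => J y + ε * dist y x ≤ J x with hR
  have hrefl : ∀ x, R x x := by intro x; simp [hR]
  have htrans : ∀ {z y x}, R z y → R y x → R z x := by
    intro z y x h1 h2
    have := dist_triangle z y x
    simp only [hR] at *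
    nlinarith [dist_nonneg (x := z) (y := y)]
  have key : ∀ (x : α) (n : ℕ), ∃ y : α, R y x ∧ ∀ w, R w x → J y ≤ J w + (1/2)^n := by
    intro x n
    have hne : (J '' {w | R w x}).Nonempty := ⟨J x, x, hrefl x, rfl⟩
    have hbd : BddBelow (J '' {w | R w x}) := ⟨B, by rintro _ ⟨w, -, rfl⟩; exact hB w⟩
    have hlt : sInf (J '' {w | R w x}) < sInf (J '' {w | R w x}) + (1/2)^n := by
      have : (0:ℝ) < (1/2)^n := by positivity
      linarith
    obtain ⟨_, ⟨y, hy, rfl⟩, hy2⟩ := exists_lt_of_csInf_lt hne hlt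
    exact ⟨y, hy, fun w hw => le_trans hy2.le (by
      have := csInf_le hbd ⟨w, hw, rfl⟩; linarith)⟩
  choose f hf1 hf2 using key
  set v : ℕ → α := fun n => Nat.rec x₀ (fun n x => f x n) n with hv
  have hv0 : v 0 = x₀ := rfl
  have hvs : ∀ n, v (n+1) = f (v n) n := fun n => rfl
  have hstep : ∀ n, R (v (n+1)) (v n) := fun n => by rw [hvs]; exact hf1 (v n) n
  have hmin : ∀ n w, R w (v n) → J (v (n+1)) ≤ J w + (1/2)^n := fun n w hw => by
    rw [hvs]; exact hf2 (v n) n w hw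
  have hchain : ∀ m n, n ≤ m → R (v m) (v n) := by
    intro m n h
    induction m with
    | zero => simpa [Nat.le_zero.mp h] using hrefl (v 0)
    | succ m ih =>
      rcases Nat.lt_or_ge n (m+1) with h'|h'
      · exact htrans (hstep m) (ih (by omega))
      · have : n = m + 1 := by omega
        subst this; exact hrefl _
  have hanti : Antitone (fun n => J (v n)) := by
    apply antitone_nat_of_succ_le
    intro n
    have := hstep n
    simp only [hR] at this
    nlinarith [dist_nonneg (x := v (n+1)) (y := v n)]
  have hbdd : BddBelow (Set.range fun n => J (v n)) := ⟨B, by rintro _ ⟨n, rfl⟩; exact hB _⟩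
  set L : ℝ := ⨅ n, J (v n) with hL
  have hLlim : Tendsto (fun n => J (v n)) atTop (𝓝 L) :=
    tendsto_atTop_ciInf hanti hbdd
  have hLle : ∀ n, L ≤ J (v n) := fun n => ciInf_le hbdd n
  -- Cauchy
  have hdist : ∀ m n, n ≤ m → ε * dist (v m) (v n) ≤ J (v n) - L := by
    intro m n h
    have h1 := hchain m n h
    simp only [hR] at h1
    have := hLle m
    linarith
  have hcauchy : CauchySeq v := by
    rw [Metric.cauchySeq_iff]
    intro δ hδ
    have : ∀ᶠ n in atTop, J (v n) - L < ε * δ := by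
      have : Tendsto (fun n => J (v n) - L) atTop (𝓝 0) := by
        simpa using hLlim.sub_const L
      exact this.eventually_lt_const (by positivity)
    obtain ⟨N, hN⟩ := this.exists_forall_of_atTop
    refine ⟨N, fun m hm n hn => ?_⟩
    rcases le_total n m with h|h
    · have := hdist m n h
      have := hN n hn
      calc dist (v m) (v n) ≤ (J (v n) - L)/ε := by
            rw [le_div_iff₀ hε]; linarith
        _ < δ := by rw [div_lt_iff₀ hε]; linarith
    · rw [dist_comm]
      have := hdist n m h
      have := hN m hm
      calc dist (v n) (v m) ≤ (J (v m) - L)/ε := by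
            rw [le_div_iff₀ hε]; linarith
        _ < δ := by rw [div_lt_iff₀ hε]; linarith
  obtain ⟨z, hz⟩ := cauchySeq_tendsto_of_complete hcauchy
  have hJz : J z ≤ L := by
    by_contra h
    push_neg at h
    obtain ⟨y, hy1, hy2⟩ := exists_between h
    have h1 : ∀ᶠ n in atTop, y < J (v n) :=
      hz.eventually (hJ z y hy2)
    have h2 : ∀ᶠ n in atTop, J (v n) < y := hLlim.eventually_lt_const hy1
    obtain ⟨n, hn1, hn2⟩ := (h1.and h2).exists
    linarith
  have hRz : ∀ n, R z (v n) := by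
    intro n
    simp only [hR]
    have hd : Tendsto (fun m => ε * dist (v m) (v n)) atTop (𝓝 (ε * dist z (v n))) :=
      ((hz.dist tendsto_const_nhds)).const_mul ε
    have hlim2 : Tendsto (fun m => J (v n) - J (v m)) atTop (𝓝 (J (v n) - L)) :=
      tendsto_const_nhds.sub hLlim
    have : ε * dist z (v n) ≤ J (v n) - L := by
      refine le_of_tendsto_of_tendsto hd hlim2 ?_
      filter_upwards [eventually_ge_atTop n] with m h
      have h1 := hchain m n h
      simp only [hR] at h1
      have := hLle m
      linarith
    linarith
  refine ⟨z, ?_, ?_⟩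
  · calc J z ≤ L := hJz
      _ ≤ J (v 0) := hLle 0
      _ = J x₀ := by rw [hv0]
  · intro w
    by_contra hcon
    push_neg at hcon
    have hRw : R w z := by
      simp only [hR]
      rw [dist_comm]
      linarith
    have hwn : ∀ n, R w (v n) := fun n => htrans hRw (hRz n)
    have hLw : L ≤ J w := by
      have h1 : ∀ n, J (v (n+1)) ≤ J w + (1/2)^n := fun n => hmin n w (hwn n)
      have h2 : Tendsto (fun n : ℕ => J w + (1/2:ℝ)^n) atTop (𝓝 (J w + 0)) :=
        tendsto_const_nhds.add (tendsto_pow_atTop_nhds_zero_of_lt_one (by norm_num) (by norm_num))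
      have h3 : Tendsto (fun n => J (v (n+1))) atTop (𝓝 L) :=
        hLlim.comp (tendsto_add_atTop_nat 1)
      have := le_of_tendsto_of_tendsto' h3 h2 h1
      simpa using this
    have : ε * dist z w ≥ 0 := by positivity
    linarith [hJz]


theorem norm_fderiv_le_of_ekeland {X : Type*} [NormedAddCommGroup X] [NormedSpace ℝ X]
    {f : X → ℝ} {v : X} (hf : DifferentiableAt ℝ f v) {ε δ : ℝ} (hε : 0 ≤ ε) (hδ : 0 < δ)
    (h : ∀ w : X, dist w v ≤ δ → f v ≤ f w + ε * dist v w) :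
    ‖fderiv ℝ f v‖ ≤ ε := by
  have key : ∀ u : X, -(ε * ‖u‖) ≤ fderiv ℝ f v u := by
    intro u
    rcases eq_or_ne u 0 with rfl|hu
    · simp
    have hcurve : HasDerivAt (fun t : ℝ => v + t • u) u 0 := by
      simpa using (((hasDerivAt_id (0:ℝ)).smul_const u).const_add v)
    have hnu : 0 < ‖u‖ := norm_pos_iff.mpr hu
    have hg : HasDerivAt (fun t : ℝ => f (v + t • u)) (fderiv ℝ f v u) 0 := by
      have hfd : HasFDerivAt f (fderiv ℝ f v) ((fun t : ℝ => v + t • u) 0) := by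
        simpa using hf.hasFDerivAt
      exact hfd.comp_hasDerivAt 0 hcurve
    rw [hasDerivAt_iff_tendsto_slope] at hg
    have hg' : Tendsto (slope (fun t : ℝ => f (v + t • u)) 0) (𝓝[>] 0) (𝓝 (fderiv ℝ f v u)) :=
      hg.mono_left (nhdsWithin_mono _ (fun t ht => ne_of_gt ht))
    refine ge_of_tendsto hg' ?_
    have hmem : Set.Ioc (0:ℝ) (δ / ‖u‖) ∈ 𝓝[>] (0:ℝ) :=
      Ioc_mem_nhdsGT_of_mem ⟨le_refl 0, div_pos hδ hnu⟩
    filter_upwards [hmem] with t ht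
    have hdist : dist (v + t • u) v ≤ δ := by
      rw [dist_eq_norm]
      simp only [add_sub_cancel_left, norm_smul, Real.norm_eq_abs, abs_of_pos ht.1]
      rw [← le_div_iff₀ hnu] at *
      exact ht.2
    have h1 := h (v + t • u) hdist
    rw [dist_comm, dist_eq_norm] at h1
    simp only [add_sub_cancel_left, norm_smul, Real.norm_eq_abs, abs_of_pos ht.1] at h1
    have ht0 := ht.1
    rw [slope_def_field]
    simp only [zero_smul, add_zero, sub_zero]
    rw [le_div_iff₀ ht0]
    nlinarith
  refine ContinuousLinearMap.opNorm_le_bound _ hε ?_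
  intro u
  have h1 := key u
  have h2 := key (-u)
  simp only [map_neg, norm_neg] at h2
  rw [Real.norm_eq_abs, abs_le]
  constructor <;> linarith


set_option maxHeartbeats 2000000 in
theorem mountain_deform {X : Type*} [NormedAddCommGroup X] [NormedSpace ℝ X]
    (J : X → ℝ) (hJ : ContDiff ℝ 1 J) (γ : C(unitInterval, X)) (κ ε F : ℝ)
    (hκ : 0 < κ) (hε : 0 < ε)
    (hFub : ∀ t, J (γ t) ≤ F)
    (hend0 : J (γ 0) < F - 2*κ) (hend1 : J (γ 1) < F - 2*κ)
    (hcrit : ∀ t : unitInterval, F - κ ≤ J (γ t) → 2*ε < ‖fderiv ℝ J (γ t)‖) :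
    ∃ (σ : C(unitInterval, X)) (τ : ℝ), 0 < τ ∧ σ 0 = γ 0 ∧ σ 1 = γ 1 ∧
      dist σ γ ≤ τ ∧ ∀ t, J (σ t) ≤ F - (3/2)*ε*τ := by
  set D : X → (X →L[ℝ] ℝ) := fun x => fderiv ℝ J x with hDdef
  have hD : Continuous D := hJ.continuous_fderiv one_ne_zero
  have hJc : Continuous J := hJ.continuous
  have hdiff : ∀ x, DifferentiableAt ℝ J x := fun x => hJ.differentiable one_ne_zero x
  set M : Set unitInterval := {t | F - κ ≤ J (γ t)} with hMdef
  have hMc : IsClosed M := isClosed_le continuous_const (hJc.comp γ.continuous)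
  have hMcpt : IsCompact M := hMc.isCompact
  -- select descent directions
  have sel : ∀ t : M, ∃ u : X, ‖u‖ ≤ 1 ∧ D (γ t) u < -(2*ε) := by
    rintro ⟨t, ht⟩
    have h1 := hcrit t ht
    by_contra hcon
    push_neg at hcon
    -- first get a unit-ball vector with |D u| > 2ε
    have hbound : ‖D (γ t)‖ ≤ 2*ε := by
      refine ContinuousLinearMap.opNorm_le_bound _ (by positivity) ?_
      intro x
      rcases eq_or_ne x 0 with rfl|hx
      · simp
      · have hnx : 0 < ‖x‖ := norm_pos_iff.mpr hx
        have hu : ‖(‖x‖⁻¹ • x)‖ ≤ 1 := by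
          rw [norm_smul, norm_inv, norm_norm]
          rw [inv_mul_cancel₀ (ne_of_gt hnx)]
        have h2 := hcon (‖x‖⁻¹ • x) hu
        have h3 := hcon (-(‖x‖⁻¹ • x)) (by rwa [norm_neg])
        have e1 : D (γ t) (‖x‖⁻¹ • x) = ‖x‖⁻¹ * D (γ t) x := by
          rw [map_smul]; simp
        rw [map_neg] at h3
        have habs : |D (γ t) (‖x‖⁻¹ • x)| ≤ 2*ε := by
          rw [abs_le]; constructor <;> linarith
        rw [e1, abs_mul, abs_inv, abs_norm] at habs
        rw [Real.norm_eq_abs]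
        calc |D (γ t) x| = ‖x‖ * (‖x‖⁻¹ * |D (γ t) x|) := by
              field_simp
          _ ≤ ‖x‖ * (2*ε) := by nlinarith
          _ = 2*ε*‖x‖ := by ring
    linarith
  choose u hu1 hu2 using sel
  -- open cover of M
  set U : M → Set unitInterval := fun i =>
    {s | D (γ s) (u i) < -(2*ε) ∧ F - 2*κ < J (γ s)} with hUdef
  have hUopen : ∀ i, IsOpen (U i) := by
    intro i
    apply IsOpen.inter
    · exact isOpen_lt ((hD.comp γ.continuous).clm_apply continuous_const) continuous_const
    · exact isOpen_lt continuous_const (hJc.comp γ.continuous)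
  have hUcover : M ⊆ ⋃ i, U i := by
    intro t ht
    refine Set.mem_iUnion.mpr ⟨⟨t, ht⟩, hu2 ⟨t, ht⟩, ?_⟩
    have : F - κ ≤ J (γ t) := ht
    linarith
  obtain ⟨T, hT⟩ := hMcpt.elim_finite_subcover U hUopen hUcover
  -- partition functions
  set φ : M → unitInterval → ℝ := fun i s =>
    max 0 (min (-(2*ε) - D (γ s) (u i)) (J (γ s) - (F - 2*κ))) with hφdef
  have hφcont : ∀ i, Continuous (φ i) := by
    intro i
    apply continuous_const.max
    exact (continuous_const.sub ((hD.comp γ.continuous).clm_apply continuous_const)).min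
      ((hJc.comp γ.continuous).sub continuous_const)
  have hφnn : ∀ i s, 0 ≤ φ i s := fun i s => le_max_left _ _
  have hφpos : ∀ i s, 0 < φ i s ↔ s ∈ U i := by
    intro i s
    simp only [hφdef, lt_max_iff, lt_min_iff, hUdef, Set.mem_setOf_eq]
    constructor
    · rintro (h|⟨h1,h2⟩)
      · exact absurd h (lt_irrefl 0)
      · constructor <;> linarith
    · rintro ⟨h1,h2⟩
      right; constructor <;> linarith
  set G : unitInterval → ℝ := fun s => ∑ i ∈ T, φ i s with hGdef
  have hGcont : Continuous G := continuous_finset_sum _ (fun i _ => hφcont i)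
  have hGnn : ∀ s, 0 ≤ G s := fun s => Finset.sum_nonneg (fun i _ => hφnn i s)
  have hGposM : ∀ s ∈ M, 0 < G s := by
    intro s hs
    obtain ⟨i, hiT, hiU⟩ := Set.mem_iUnion₂.mp (hT hs)
    exact Finset.sum_pos' (fun j _ => hφnn j s) ⟨i, hiT, (hφpos i s).mpr hiU⟩
  -- uniform positive lower bound on M
  have hδ₀ : ∃ δ₀ > 0, ∀ s ∈ M, δ₀ ≤ G s := by
    rcases M.eq_empty_or_nonempty with hM|hM
    · exact ⟨1, one_pos, by simp [hM]⟩
    · obtain ⟨t₀, ht₀, hmin⟩ := hMcpt.exists_isMinOn hM hGcont.continuousOn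
      exact ⟨G t₀, hGposM t₀ ht₀, fun s hs => hmin hs⟩
  obtain ⟨δ₀, hδ₀pos, hδ₀le⟩ := hδ₀
  -- weights and vector field
  set w : M → unitInterval → ℝ := fun i s => φ i s / max (G s) δ₀ with hwdef
  have hden : ∀ s, 0 < max (G s) δ₀ := fun s => lt_max_of_lt_right hδ₀pos
  have hwnn : ∀ i s, 0 ≤ w i s := fun i s => div_nonneg (hφnn i s) (hden s).le
  have hwsum_le : ∀ s, ∑ i ∈ T, w i s ≤ 1 := by
    intro s
    rw [hwdef]
    simp only
    rw [← Finset.sum_div]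
    rw [div_le_one (hden s)]
    exact le_max_left _ _
  have hwsum_M : ∀ s ∈ M, ∑ i ∈ T, w i s = 1 := by
    intro s hs
    rw [hwdef]
    simp only
    rw [← Finset.sum_div]
    rw [max_eq_left (hδ₀le s hs), div_self (ne_of_gt (hGposM s hs))]
  set v : unitInterval → X := fun s => ∑ i ∈ T, w i s • u i with hvdef
  have hvcont : Continuous v :=
    continuous_finset_sum _ (fun i _ => ((hφcont i).div (hGcont.max continuous_const)
      (fun s => ne_of_gt (hden s))).smul continuous_const)
  have hvnorm : ∀ s, ‖v s‖ ≤ 1 := by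
    intro s
    calc ‖v s‖ ≤ ∑ i ∈ T, ‖w i s • u i‖ := norm_sum_le _ _
      _ ≤ ∑ i ∈ T, w i s := by
          refine Finset.sum_le_sum (fun i _ => ?_)
          rw [norm_smul, Real.norm_eq_abs, abs_of_nonneg (hwnn i s)]
          nlinarith [hu1 i, hwnn i s, norm_nonneg (u i)]
      _ ≤ 1 := hwsum_le s
  have hvD : ∀ s, D (γ s) (v s) ≤ -(2*ε) * ∑ i ∈ T, w i s := by
    intro s
    rw [hvdef]
    simp only [map_sum, map_smul, smul_eq_mul]
    rw [Finset.mul_sum]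
    refine Finset.sum_le_sum (fun i _ => ?_)
    rcases eq_or_lt_of_le (hwnn i s) with h|h
    · rw [← h]; simp
    · have hU : s ∈ U i := by
        rw [← hφpos i s]
        have : 0 < φ i s := by
          by_contra hc
          push_neg at hc
          rw [hwdef] at h
          simp only at h
          have := div_nonpos_of_nonpos_of_nonneg hc (hden s).le
          linarith
        exact this
      have := hU.1
      nlinarith
  have hvD0 : ∀ s, D (γ s) (v s) ≤ 0 := by
    intro s
    have h1 := hvD s
    have h2 : 0 ≤ ∑ i ∈ T, w i s := Finset.sum_nonneg (fun i _ => hwnn i s)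
    nlinarith
  have hvDM : ∀ s ∈ M, D (γ s) (v s) ≤ -(2*ε) := by
    intro s hs
    have := hvD s
    rw [hwsum_M s hs] at this
    linarith
  have hv0 : v 0 = 0 := by
    rw [hvdef]
    refine Finset.sum_eq_zero (fun i _ => ?_)
    have : φ i 0 = 0 := by
      have h0 : ¬ (0:unitInterval) ∈ U i := by
        intro h
        exact absurd h.2 (by linarith)
      rw [hφdef]
      simp only
      by_contra hc
      have : 0 < φ i 0 := lt_of_le_of_ne (hφnn i 0) (Ne.symm hc)
      exact h0 ((hφpos i 0).mp this)
    rw [hwdef]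
    simp only [this, zero_div, zero_smul]
  have hv1 : v 1 = 0 := by
    rw [hvdef]
    refine Finset.sum_eq_zero (fun i _ => ?_)
    have : φ i 1 = 0 := by
      have h0 : ¬ (1:unitInterval) ∈ U i := by
        intro h
        exact absurd h.2 (by linarith)
      rw [hφdef]
      simp only
      by_contra hc
      have : 0 < φ i 1 := lt_of_le_of_ne (hφnn i 1) (Ne.symm hc)
      exact h0 ((hφpos i 1).mp this)
    rw [hwdef]
    simp only [this, zero_div, zero_smul]
  -- uniform Taylor estimate via tube lemma
  have tube : ∃ δ > 0, ∀ (t : unitInterval) (a : ℝ), |a| < δ →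
      ‖D (γ t + a • v t) - D (γ t)‖ < ε/2 := by
    set A : Set (unitInterval × ℝ) :=
      {p | ‖D (γ p.1 + p.2 • v p.1) - D (γ p.1)‖ < ε/2} with hAdef
    have hAopen : IsOpen A := by
      have hc : Continuous fun p : unitInterval × ℝ =>
          ‖D (γ p.1 + p.2 • v p.1) - D (γ p.1)‖ := by
        apply Continuous.norm
        apply Continuous.sub
        · exact hD.comp ((γ.continuous.comp continuous_fst).add
            (continuous_snd.smul (hvcont.comp continuous_fst)))
        · exact hD.comp (γ.continuous.comp continuous_fst)
      exact isOpen_lt hc continuous_const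
    have hsub : (Set.univ : Set unitInterval) ×ˢ ({0} : Set ℝ) ⊆ A := by
      rintro ⟨t, a⟩ ⟨-, ha⟩
      simp only [Set.mem_singleton_iff] at ha
      subst ha
      simp only [hAdef, Set.mem_setOf_eq, zero_smul, add_zero, sub_self, norm_zero]
      positivity
    obtain ⟨U', V', hU'o, hV'o, hU's, hV's, hUV⟩ :=
      generalized_tube_lemma isCompact_univ isCompact_singleton hAopen hsub
    have hV'nhds : V' ∈ 𝓝 (0:ℝ) := hV'o.mem_nhds (hV's rfl)
    obtain ⟨δ, hδpos, hball⟩ := Metric.mem_nhds_iff.mp hV'nhds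
    refine ⟨δ, hδpos, fun t a ha => ?_⟩
    have : (t, a) ∈ A := hUV ⟨hU's (Set.mem_univ t), hball (by simpa [Real.dist_eq] using ha)⟩
    exact this
  obtain ⟨δ, hδpos, htaylor⟩ := tube
  -- choose τ
  set τ : ℝ := min (δ/2) (κ/(2*ε)) with hτdef
  have hτpos : 0 < τ := lt_min (by positivity) (by positivity)
  have hτδ : τ < δ := lt_of_le_of_lt (min_le_left _ _) (by linarith)
  have hτκ : 2*ε*τ ≤ κ := by
    have := min_le_right (δ/2) (κ/(2*ε))
    rw [hτdef]
    calc 2*ε*(min (δ/2) (κ/(2*ε))) ≤ 2*ε*(κ/(2*ε)) := by nlinarith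
      _ = κ := by field_simp
  -- the perturbed path
  set σ : C(unitInterval, X) := ⟨fun t => γ t + τ • v t,
    γ.continuous.add (continuous_const.smul hvcont)⟩ with hσdef
  have hσ_eval : ∀ t, σ t = γ t + τ • v t := fun t => rfl
  have hσ0 : σ 0 = γ 0 := by rw [hσ_eval, hv0, smul_zero, add_zero]
  have hσ1 : σ 1 = γ 1 := by rw [hσ_eval, hv1, smul_zero, add_zero]
  have hdist : dist σ γ ≤ τ := by
    rw [ContinuousMap.dist_le hτpos.le]
    intro t
    rw [hσ_eval, dist_eq_norm]
    simp only [add_sub_cancel_left, norm_smul, Real.norm_eq_abs, abs_of_pos hτpos]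
    nlinarith [hvnorm t, hτpos]
  refine ⟨σ, τ, hτpos, hσ0, hσ1, hdist, ?_⟩
  intro t
  -- Taylor estimate at t
  have htay : J (σ t) ≤ J (γ t) + τ * D (γ t) (v t) + ε/2 * τ := by
    have key := Convex.norm_image_sub_le_of_norm_fderiv_le'
      (f := J) (φ := D (γ t)) (C := ε/2) (s := segment ℝ (γ t) (γ t + τ • v t))
      (x := γ t) (y := γ t + τ • v t)
      (fun y _ => hdiff y) ?_ (convex_segment _ _)
      (left_mem_segment ℝ _ _) (right_mem_segment ℝ _ _)
    · have h1 : D (γ t) (γ t + τ • v t - γ t) = τ * D (γ t) (v t) := by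
        simp [map_smul]
      rw [h1] at key
      have h2 : ‖γ t + τ • v t - γ t‖ ≤ τ := by
        simp only [add_sub_cancel_left, norm_smul, Real.norm_eq_abs, abs_of_pos hτpos]
        nlinarith [hvnorm t]
      have h3 : |J (σ t) - J (γ t) - τ * D (γ t) (v t)| ≤ ε/2 * τ := by
        rw [hσ_eval]
        calc |J (γ t + τ • v t) - J (γ t) - τ * D (γ t) (v t)| ≤ ε/2 * ‖γ t + τ • v t - γ t‖ := key
          _ ≤ ε/2 * τ := by nlinarith
      have := abs_le.mp h3
      linarith [this.1, this.2]
    · intro y hy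
      rw [segment_eq_image'] at hy
      obtain ⟨θ, hθ, rfl⟩ := hy
      have heq : (fun θ : ℝ => γ t + θ • (γ t + τ • v t - γ t)) θ = γ t + (θ * τ) • v t := by
        simp only [add_sub_cancel_left, smul_smul]
      rw [heq]
      refine (htaylor t (θ*τ) ?_).le
      rw [abs_of_nonneg (by nlinarith [hθ.1, hτpos] : (0:ℝ) ≤ θ*τ)]
      nlinarith [hθ.1, hθ.2, hτpos, hτδ]
  by_cases hM : t ∈ M
  · have := hvDM t hM
    have := hFub t
    nlinarith
  · have hlt : J (γ t) < F - κ := by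
      simp only [hMdef, Set.mem_setOf_eq, not_le] at hM
      exact hM
    have := hvD0 t
    nlinarith

set_option maxHeartbeats 2000000 in
/-- Bonanno's two critical points theorem. -/
theorem bonanno_two_critical_points {X : Type*}
    [NormedAddCommGroup X] [NormedSpace ℝ X] [CompleteSpace X]
    (Φ Ψ : X → ℝ) (hΦ : ContDiff ℝ 1 Φ) (hΨ : ContDiff ℝ 1 Ψ)
    (r : ℝ) (ubar : X)
    (hA1 : Φ 0 = 0 ∧ Ψ 0 = 0 ∧ ∀ u : X, Φ 0 ≤ Φ u)
    (hA2 : 0 < Φ ubar ∧ Φ ubar < r)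
    (hA3 : sSup ((fun u => Ψ u / r) '' {u : X | Φ u ≤ r}) < Ψ ubar / Φ ubar)
    (hA4 : ∀ lam ∈ Set.Ioo (Φ ubar / Ψ ubar)
        (sSup ((fun u => Ψ u / r) '' {u : X | Φ u ≤ r}))⁻¹,
      ¬ BddBelow (Set.range fun u => Φ u - lam * Ψ u)) :
    ∀ lam ∈ Set.Ioo (Φ ubar / Ψ ubar)
        (sSup ((fun u => Ψ u / r) '' {u : X | Φ u ≤ r}))⁻¹,
      PalaisSmale (fun u => Φ u - lam * Ψ u) →
      ∃ ulam vlam : X,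
        fderiv ℝ (fun u => Φ u - lam * Ψ u) ulam = 0 ∧
        fderiv ℝ (fun u => Φ u - lam * Ψ u) vlam = 0 ∧
        Φ ulam - lam * Ψ ulam < 0 ∧ 0 < Φ vlam - lam * Ψ vlam := by
  intro lam hlam hPS
  set S : Set ℝ := (fun u => Ψ u / r) '' {u : X | Φ u ≤ r} with hSdef
  set s : ℝ := sSup S with hsdef
  set J : X → ℝ := fun u => Φ u - lam * Ψ u with hJdef
  have hJC : ContDiff ℝ 1 J := hΦ.sub (contDiff_const.mul hΨ)
  have hJcont : Continuous J := hJC.continuous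
  have hDcont : Continuous (fderiv ℝ J) := hJC.continuous_fderiv one_ne_zero
  have hJdiff : ∀ x, DifferentiableAt ℝ J x := fun x => hJC.differentiable one_ne_zero x
  have hr : 0 < r := lt_trans hA2.1 hA2.2
  have hΦnn : ∀ u, 0 ≤ Φ u := fun u => hA1.1 ▸ hA1.2.2 u
  have h0S : (0:ℝ) ∈ S := ⟨0, by simp [hA1.1, hr.le], by simp [hA1.2.1]⟩
  have hbdd : BddAbove S := by
    by_contra hb
    rw [Real.sSup_of_not_bddAbove hb] at hsdef
    have h1 : (0:ℝ) < Ψ ubar / Φ ubar := lt_of_le_of_lt (by rw [← hsdef]) hA3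
    have h2 : 0 < Ψ ubar := by
      rcases div_pos_iff.mp h1 with ⟨h,_⟩|⟨_,h⟩
      · exact h
      · linarith [hA2.1]
    have h3 : 0 < Φ ubar / Ψ ubar := div_pos hA2.1 h2
    have := hlam.1
    have := hlam.2
    rw [hsdef] at hlam
    simp only [inv_zero] at hlam
    linarith [hlam.1, hlam.2]
  have hs0 : 0 ≤ s := le_csSup hbdd h0S
  have hΨubar : 0 < Ψ ubar := by
    have h1 : (0:ℝ) < Ψ ubar / Φ ubar := lt_of_le_of_lt hs0 hA3
    rcases div_pos_iff.mp h1 with ⟨h,_⟩|⟨_,h⟩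
    · exact h
    · linarith [hA2.1]
  have hlampos : 0 < lam := lt_trans (div_pos hA2.1 hΨubar) hlam.1
  have hspos : 0 < s := by
    rcases lt_or_eq_of_le hs0 with h|h
    · exact h
    · exfalso
      have := hlam.2
      rw [← h] at this
      simp only [inv_zero] at this
      linarith
  have hlams : lam * s < 1 := by
    have := mul_lt_mul_of_pos_right hlam.2 hspos
    rwa [inv_mul_cancel₀ (ne_of_gt hspos)] at this
  have hΨle : ∀ u, Φ u ≤ r → Ψ u ≤ r * s := by
    intro u hu
    have h1 : Ψ u / r ≤ s := le_csSup hbdd ⟨u, hu, rfl⟩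
    rw [div_le_iff₀ hr] at h1
    linarith [h1]
  set ρ : ℝ := lam * (r * s) with hρdef
  have hρpos : 0 < ρ := by positivity
  have hρr : ρ < r := by
    rw [hρdef]
    calc lam * (r * s) = (lam * s) * r := by ring
      _ < 1 * r := by nlinarith
      _ = r := one_mul r
  have hJlb : ∀ u, Φ u ≤ r → -ρ ≤ J u := by
    intro u hu
    have h1 := hΨle u hu
    have h2 := hΦnn u
    rw [hJdef]
    simp only
    nlinarith
  -- the sublevel set
  set C : Set X := {u : X | Φ u ≤ r} with hCdef
  have hCclosed : IsClosed C := isClosed_le hΦ.continuous continuous_const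
  haveI : CompleteSpace C := hCclosed.completeSpace_coe
  have hubarC : ubar ∈ C := le_of_lt hA2.2
  haveI : Nonempty C := ⟨⟨ubar, hubarC⟩⟩
  have hbddJ : BddBelow (Set.range fun u : C => J u.val) :=
    ⟨-ρ, by rintro _ ⟨u, rfl⟩; exact hJlb u.val u.2⟩
  set c₁ : ℝ := ⨅ u : C, J u.val with hc₁def
  have hc₁le : ∀ u : C, c₁ ≤ J u.val := fun u => ciInf_le hbddJ u
  have hJubar : J ubar < 0 := by
    have h1 : Φ ubar / Ψ ubar < lam := hlam.1
    rw [div_lt_iff₀ hΨubar] at h1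
    rw [hJdef]
    simp only
    nlinarith
  have hc₁neg : c₁ < 0 := lt_of_le_of_lt (hc₁le ⟨ubar, hubarC⟩) hJubar
  -- Ekeland sequence for the local minimum
  have step1 : ∀ n : ℕ, ∃ x : X, c₁ ≤ J x ∧ J x ≤ c₁ + 1/(n+1) ∧
      ‖fderiv ℝ J x‖ ≤ 1/(n+1) ∧ Φ x ≤ r := by
    intro n
    set εn : ℝ := min (1/(n+1)) (-c₁/2) with hεdef
    have hεpos : 0 < εn := lt_min (by positivity) (by linarith)
    have hεle : εn ≤ 1/(n+1) := min_le_left _ _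
    have hlt : (⨅ u : C, J u.val) < c₁ + εn := by rw [← hc₁def]; linarith
    obtain ⟨x₀, hx₀⟩ := exists_lt_of_ciInf_lt hlt
    obtain ⟨v, hv1, hv2⟩ := ekeland_weak (fun u : C => J u.val)
      ((hJcont.comp continuous_subtype_val).lowerSemicontinuous)
      (-ρ) (fun u => hJlb u.val u.2) εn hεpos x₀
    have hvval : J v.val ≤ c₁ + εn := le_trans hv1 hx₀.le
    have hvneg : J v.val < 0 := by
      have : εn ≤ -c₁/2 := min_le_right _ _
      linarith
    have hΦv : Φ v.val < r := by
      have h1 : Φ v.val - lam * Ψ v.val < 0 := hvneg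
      have h2 := hΨle v.val v.2
      nlinarith [hΦnn v.val]
    obtain ⟨δ, hδpos, hball⟩ := Metric.isOpen_iff.mp
      (isOpen_lt hΦ.continuous continuous_const) v.val hΦv
    have hek : ∀ w : X, dist w v.val ≤ δ/2 → J v.val ≤ J w + εn * dist v.val w := by
      intro w hw
      have hwC : w ∈ C := by
        have : w ∈ Metric.ball v.val δ := by
          rw [Metric.mem_ball]
          linarith
        have h5 : Φ w < r := hball this
        exact le_of_lt h5
      have := hv2 ⟨w, hwC⟩
      rwa [Subtype.dist_eq] at this
    have := norm_fderiv_le_of_ekeland (hJdiff v.val) hεpos.le (by positivity : (0:ℝ) < δ/2) hek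
    exact ⟨v.val, hc₁le v, hvval.trans (by linarith), this.trans hεle, v.2⟩
  choose y hy1 hy2 hy3 hy4 using step1
  have hJy : Tendsto (fun n => J (y n)) atTop (𝓝 c₁) := by
    have h1 : Tendsto (fun n : ℕ => c₁ + 1/(n+1:ℝ)) atTop (𝓝 (c₁ + 0)) :=
      tendsto_const_nhds.add tendsto_one_div_add_atTop_nhds_zero_nat
    rw [add_zero] at h1
    exact tendsto_of_tendsto_of_tendsto_of_le_of_le tendsto_const_nhds h1 hy1 hy2
  have hDy : Tendsto (fun n => fderiv ℝ J (y n)) atTop (𝓝 0) := by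
    rw [tendsto_zero_iff_norm_tendsto_zero]
    exact squeeze_zero (fun n => norm_nonneg _) hy3 tendsto_one_div_add_atTop_nhds_zero_nat
  obtain ⟨ulam, φ₁, hφ₁, hconv₁⟩ := hPS y c₁ hJy hDy
  have hJulam : J ulam = c₁ := by
    refine tendsto_nhds_unique ((hJcont.tendsto ulam).comp hconv₁) ?_
    exact hJy.comp hφ₁.tendsto_atTop
  have hDulam : fderiv ℝ J ulam = 0 := by
    refine tendsto_nhds_unique ((hDcont.tendsto ulam).comp hconv₁) ?_
    exact hDy.comp hφ₁.tendsto_atTop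
  -- membership of the local minimizer in the sublevel set
  have hyC : ∀ n, Φ (y n) ≤ r := hy4
  have haC : Φ ulam ≤ r := by
    have : ∀ᶠ k in atTop, y (φ₁ k) ∈ C := Eventually.of_forall (fun k => hy4 (φ₁ k))
    exact hCclosed.mem_of_tendsto hconv₁ this
  have hΦa : Φ ulam < ρ := by
    have h1 : J ulam < 0 := by rw [hJulam]; exact hc₁neg
    have h2 : Φ ulam - lam * Ψ ulam < 0 := h1
    have h3 := hΨle ulam haC
    nlinarith
  -- a point below the barrier level
  have hnb := hA4 lam hlam
  rw [not_bddBelow_iff] at hnb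
  obtain ⟨z₀, ⟨b, rfl⟩, hb⟩ := hnb (-ρ)
  have hΦb : r < Φ b := by
    by_contra hc
    push_neg at hc
    exact absurd hb (not_lt.mpr (hJlb b hc))
  set m : ℝ := (ρ + r)/2 with hmdef
  set β : ℝ := (r - ρ)/2 with hβdef
  have hβpos : 0 < β := by rw [hβdef]; linarith
  have hρm : ρ < m := by rw [hmdef]; linarith
  have hmr : m < r := by rw [hmdef]; linarith
  -- the space of paths
  set ΓS : Set C(unitInterval, X) := {γ | γ 0 = ulam ∧ γ 1 = b} with hΓdef
  have hΓclosed : IsClosed ΓS := by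
    have : ΓS = {γ : C(unitInterval, X) | γ 0 = ulam} ∩ {γ | γ 1 = b} := rfl
    rw [this]
    exact (isClosed_eq (continuous_eval_const 0) continuous_const).inter
      (isClosed_eq (continuous_eval_const 1) continuous_const)
  haveI : CompleteSpace ΓS := hΓclosed.completeSpace_coe
  have hγ₀ : (⟨fun t => ulam + (t:ℝ) • (b - ulam), by continuity⟩ : C(unitInterval, X)) ∈ ΓS := by
    constructor
    · show ulam + ((0:unitInterval):ℝ) • (b - ulam) = ulam
      norm_num
    · show ulam + ((1:unitInterval):ℝ) • (b - ulam) = b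
      norm_num
  haveI : Nonempty ΓS := ⟨⟨_, hγ₀⟩⟩
  set F : ΓS → ℝ := fun γ => ⨆ t, J (γ.val t) with hFdef
  have hbddF : ∀ γ : ΓS, BddAbove (Set.range fun t => J (γ.val t)) :=
    fun γ => (isCompact_range (hJcont.comp γ.val.continuous)).bddAbove
  have hFub : ∀ (γ : ΓS) t, J (γ.val t) ≤ F γ := fun γ t => le_ciSup (hbddF γ) t
  have hproj0 : Set.projIcc (0:ℝ) 1 zero_le_one 0 = (0:unitInterval) := by
    apply Subtype.ext
    simp [Set.projIcc]
  have hproj1 : Set.projIcc (0:ℝ) 1 zero_le_one 1 = (1:unitInterval) := by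
    apply Subtype.ext
    simp [Set.projIcc]
  have hcross : ∀ γ : ΓS, ∃ t, Φ (γ.val t) = m := by
    intro γ
    set g : ℝ → ℝ := fun x => Φ (γ.val (Set.projIcc 0 1 zero_le_one x)) with hgdef
    have hgc : Continuous g := hΦ.continuous.comp (γ.val.continuous.comp continuous_projIcc)
    have hg0 : g 0 = Φ ulam := by rw [hgdef]; simp only [hproj0, γ.2.1]
    have hg1 : g 1 = Φ b := by rw [hgdef]; simp only [hproj1, γ.2.2]
    have hm : m ∈ Set.Icc (g 0) (g 1) := by
      rw [hg0, hg1]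
      exact ⟨by linarith, by linarith⟩
    obtain ⟨x, -, hx⟩ := intermediate_value_Icc zero_le_one hgc.continuousOn hm
    exact ⟨Set.projIcc 0 1 zero_le_one x, hx⟩
  have hFβ : ∀ γ : ΓS, β ≤ F γ := by
    intro γ
    obtain ⟨t, ht⟩ := hcross γ
    have h1 : Ψ (γ.val t) ≤ r * s := hΨle _ (ht.le.trans hmr.le)
    have h2 : β ≤ J (γ.val t) := by
      show β ≤ Φ (γ.val t) - lam * Ψ (γ.val t)
      rw [ht, hmdef, hβdef]
      nlinarith
    exact h2.trans (hFub γ t)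
  have hlscF : LowerSemicontinuous F := by
    intro γ yv hyv
    obtain ⟨t, ht⟩ := exists_lt_of_lt_ciSup hyv
    have hco : Continuous fun σ : ΓS => J (σ.val t) :=
      hJcont.comp ((continuous_eval_const t).comp continuous_subtype_val)
    have hopen : IsOpen {σ : ΓS | yv < J (σ.val t)} := isOpen_lt continuous_const hco
    filter_upwards [hopen.mem_nhds ht] with σ hσ
    exact lt_of_lt_of_le hσ (hFub σ t)
  set c₂ : ℝ := ⨅ γ : ΓS, F γ with hc₂def
  have hbddF2 : BddBelow (Set.range F) := ⟨β, by rintro _ ⟨γ, rfl⟩; exact hFβ γ⟩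
  have hc₂β : β ≤ c₂ := le_ciInf hFβ
  have hc₂le : ∀ γ : ΓS, c₂ ≤ F γ := fun γ => ciInf_le hbddF2 γ
  -- almost critical sequence at the mountain pass level
  have step2 : ∀ n : ℕ, ∃ x : X, |J x - c₂| ≤ 1/(n+1) ∧ ‖fderiv ℝ J x‖ ≤ 2/(n+1) := by
    intro n
    set εn : ℝ := min (1/(n+1)) (β/8) with hεdef
    have hεpos : 0 < εn := lt_min (by positivity) (by linarith)
    have hεle : εn ≤ 1/(n+1) := min_le_left _ _
    have hεβ : εn ≤ β/8 := min_le_right _ _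
    have hlt : (⨅ γ : ΓS, F γ) < c₂ + εn := by rw [← hc₂def]; linarith
    obtain ⟨x₀, hx₀⟩ := exists_lt_of_ciInf_lt hlt
    obtain ⟨γe, hγe1, hγe2⟩ := ekeland_weak F hlscF β hFβ εn hεpos x₀
    have hγeval : F γe ≤ c₂ + εn := le_trans hγe1 hx₀.le
    have claim : ∃ t, F γe - εn ≤ J (γe.val t) ∧ ‖fderiv ℝ J (γe.val t)‖ ≤ 2*εn := by
      by_contra hno
      push_neg at hno
      have hcrit : ∀ t : unitInterval, F γe - εn ≤ J (γe.val t) →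
          2*εn < ‖fderiv ℝ J (γe.val t)‖ := by
        intro t ht
        exact hno t ht
      obtain ⟨σmap, τ, hτpos, hσ0, hσ1, hσd, hσub⟩ :=
        mountain_deform J hJC γe.val εn εn (F γe) hεpos hεpos (hFub γe)
          (by rw [γe.2.1, hJulam]; linarith [hFβ γe, hεβ, hc₁neg, hβpos])
          (by rw [γe.2.2]; show J b < _
              have hb' : J b < -ρ := hb
              linarith [hFβ γe, hεβ, hρpos, hβpos, hb']) hcrit
      have hσΓ : σmap ∈ ΓS := ⟨hσ0.trans γe.2.1, hσ1.trans γe.2.2⟩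
      have hE := hγe2 ⟨σmap, hσΓ⟩
      have hFσ : F ⟨σmap, hσΓ⟩ ≤ F γe - (3/2)*εn*τ := ciSup_le hσub
      have hd : dist γe (⟨σmap, hσΓ⟩ : ΓS) ≤ τ := by
        rw [Subtype.dist_eq, dist_comm]
        exact hσd
      have h6 : εn * dist γe (⟨σmap, hσΓ⟩ : ΓS) ≤ εn * τ :=
        mul_le_mul_of_nonneg_left hd hεpos.le
      nlinarith [hE, hFσ, h6]
    obtain ⟨t, ht1, ht2⟩ := claim
    refine ⟨γe.val t, ?_, ?_⟩
    · rw [abs_le]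
      constructor
      · have k1 : c₂ ≤ F γe := hc₂le γe
        have k2 : F γe - εn ≤ J (γe.val t) := ht1
        have k3 : εn ≤ 1/((n:ℝ)+1) := hεle
        show -(1/((n:ℝ)+1)) ≤ J (γe.val t) - c₂
        have k6 : c₂ - 1/((n:ℝ)+1) ≤ J (γe.val t) :=
          le_trans (sub_le_sub_left k3 c₂) (le_trans (sub_le_sub_right k1 εn) k2)
        have k7 : -(1/((n:ℝ)+1)) + c₂ = c₂ - 1/((n:ℝ)+1) := by ring
        rw [le_sub_iff_add_le, k7]
        exact k6
      · have k1 : F γe ≤ c₂ + εn := hγeval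
        have k2 : J (γe.val t) ≤ F γe := hFub γe t
        have k3 : εn ≤ 1/((n:ℝ)+1) := hεle
        show J (γe.val t) - c₂ ≤ 1/((n:ℝ)+1)
        have k6 : J (γe.val t) ≤ c₂ + 1/((n:ℝ)+1) :=
          le_trans k2 (le_trans k1 (add_le_add_right k3 c₂))
        rw [sub_le_iff_le_add]
        exact k6.trans (le_of_eq (add_comm c₂ _))
    · calc ‖fderiv ℝ J (γe.val t)‖ ≤ 2*εn := ht2
        _ ≤ 2/(n+1) := by rw [div_eq_mul_one_div]; nlinarith
  choose z hz1 hz2 using step2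
  have hJz : Tendsto (fun n => J (z n)) atTop (𝓝 c₂) := by
    rw [← tendsto_sub_nhds_zero_iff]
    exact squeeze_zero_norm hz1 tendsto_one_div_add_atTop_nhds_zero_nat
  have hDz : Tendsto (fun n => fderiv ℝ J (z n)) atTop (𝓝 0) := by
    rw [tendsto_zero_iff_norm_tendsto_zero]
    refine squeeze_zero (fun n => norm_nonneg _) hz2 ?_
    have : (fun n : ℕ => 2/((n:ℝ)+1)) = fun n : ℕ => 2 * (1/((n:ℝ)+1)) := by
      funext n; ring
    rw [this]
    simpa using tendsto_one_div_add_atTop_nhds_zero_nat.const_mul (2:ℝ)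
  obtain ⟨vlam, φ₂, hφ₂, hconv₂⟩ := hPS z c₂ hJz hDz
  have hJvlam : J vlam = c₂ := by
    refine tendsto_nhds_unique ((hJcont.tendsto vlam).comp hconv₂) ?_
    exact hJz.comp hφ₂.tendsto_atTop
  have hDvlam : fderiv ℝ J vlam = 0 := by
    refine tendsto_nhds_unique ((hDcont.tendsto vlam).comp hconv₂) ?_
    exact hDz.comp hφ₂.tendsto_atTop
  refine ⟨ulam, vlam, hDulam, hDvlam, ?_, ?_⟩
  · show J ulam < 0
    rw [hJulam]; exact hc₁neg
  · show 0 < J vlam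
    rw [hJvlam]; linarith
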